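/- In K[x_1,...,x_5,y_1,...,y_5], the sum of the three prime ideals I_2 = ⟨x_2,y_2,Δ_{34},Δ_{35},Δ_{45}⟩, I_4 = ⟨x_4,y_4,Δ_{12},Δ_{13},Δ_{23}⟩ and I_5 = ⟨x_2,y_2,x_4,y_4⟩ equals ⟨x_2,y_2,x_4,y_4,Δ_{13},Δ_{35}⟩ and admits the primary decomposition I_2 + I_4 + I_5 = ⟨x_2,y_2,x_4,y_4,Δ_{13},Δ_{15},Δ_{35}⟩ ∩ ⟨x_2,y_2,x_3,y_3,x_4,y_4⟩; in particular I_2 + I_4 + I_5 is not prime. -/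
import Mathlib


open MvPolynomial

/-- The 2-minor `Δ_{ij} = x_i y_j - x_j y_i` in `K[x_1,…,x_5,y_1,…,y_5]`.
Vertices `1,…,5` are represented by `0,…,4 : Fin 5`; `x_i := X (Sum.inl i)`,
`y_i := X (Sum.inr i)`. -/
noncomputable def binDelta5 (K : Type) [Field K] (i j : Fin 5) :
    MvPolynomial (Fin 5 ⊕ Fin 5) K :=
  X (Sum.inl i) * X (Sum.inr j) - X (Sum.inl j) * X (Sum.inr i)


section KillVars

theorem sub_killVars_mem {σ R : Type*} [CommRing R] [DecidableEq σ] (S : Finset σ)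
    (f : MvPolynomial σ R) :
    f - aeval (R := R) (fun v => if v ∈ S then 0 else X v) f ∈
      Ideal.span ((fun v => (X v : MvPolynomial σ R)) '' ↑S) := by
  induction f using MvPolynomial.induction_on with
  | C a => simp
  | add p q hp hq =>
      rw [map_add, add_sub_add_comm]
      exact Ideal.add_mem _ hp hq
  | mul_X p v hp =>
      by_cases hv : v ∈ S
      · have h0 : aeval (R := R) (fun v => if v ∈ S then 0 else (X v : MvPolynomial σ R)) (p * X v) = 0 := by
          simp [hv]
        rw [h0, sub_zero]
        exact Ideal.mul_mem_left _ _ (Ideal.subset_span ⟨v, by simpa using hv, rfl⟩)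
      · have h : p * X v - aeval (R := R) (fun v => if v ∈ S then 0 else (X v : MvPolynomial σ R)) (p * X v) =
            (p - aeval (R := R) (fun v => if v ∈ S then 0 else X v) p) * X v := by
          rw [map_mul, aeval_X, if_neg hv, sub_mul]
        rw [h]; exact Ideal.mul_mem_right _ _ hp

theorem ker_killVars {σ R : Type*} [CommRing R] [DecidableEq σ] (S : Finset σ) :
    RingHom.ker (aeval (R := R) (fun v => if v ∈ S then 0 else X v) :
        MvPolynomial σ R →ₐ[R] MvPolynomial σ R) =
      Ideal.span ((fun v => (X v : MvPolynomial σ R)) '' ↑S) := by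
  apply le_antisymm
  · intro f hf
    have h := sub_killVars_mem S f
    rw [RingHom.mem_ker] at hf
    rwa [hf, sub_zero] at h
  · rw [Ideal.span_le]
    rintro _ ⟨v, hv, rfl⟩
    simp only [SetLike.mem_coe, RingHom.mem_ker]
    simp [show v ∈ S from by simpa using hv]

end KillVars

namespace DetAux

variable (K : Type) [Field K]

noncomputable def w : Fin 5 → MvPolynomial (Fin 5) K := fun i =>
  if i = 0 then X 2 else if i = 2 then X 3 else if i = 4 then X 4 else 0

noncomputable def φ : MvPolynomial (Fin 5 ⊕ Fin 5) K →ₐ[K] MvPolynomial (Fin 5) K :=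
  aeval (Sum.elim (fun i => X 0 * w K i) (fun i => X 1 * w K i))

def Std (d : (Fin 5 ⊕ Fin 5) →₀ ℕ) : Prop :=
  d (Sum.inl 1) = 0 ∧ d (Sum.inr 1) = 0 ∧ d (Sum.inl 3) = 0 ∧ d (Sum.inr 3) = 0 ∧
  (0 < d (Sum.inl 2) → d (Sum.inr 0) = 0) ∧
  (0 < d (Sum.inl 4) → d (Sum.inr 0) = 0 ∧ d (Sum.inr 2) = 0)

noncomputable def E (d : (Fin 5 ⊕ Fin 5) →₀ ℕ) : Fin 5 →₀ ℕ :=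
  Finsupp.single 0 (d (Sum.inl 0) + d (Sum.inl 2) + d (Sum.inl 4)) +
  Finsupp.single 1 (d (Sum.inr 0) + d (Sum.inr 2) + d (Sum.inr 4)) +
  Finsupp.single 2 (d (Sum.inl 0) + d (Sum.inr 0)) +
  Finsupp.single 3 (d (Sum.inl 2) + d (Sum.inr 2)) +
  Finsupp.single 4 (d (Sum.inl 4) + d (Sum.inr 4))

lemma std_expand {d : (Fin 5 ⊕ Fin 5) →₀ ℕ} (p1 : d (Sum.inl 1) = 0)
    (p2 : d (Sum.inr 1) = 0) (p3 : d (Sum.inl 3) = 0) (p4 : d (Sum.inr 3) = 0) :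
    d = Finsupp.single (Sum.inl 0) (d (Sum.inl 0)) + Finsupp.single (Sum.inl 2) (d (Sum.inl 2)) +
        Finsupp.single (Sum.inl 4) (d (Sum.inl 4)) + Finsupp.single (Sum.inr 0) (d (Sum.inr 0)) +
        Finsupp.single (Sum.inr 2) (d (Sum.inr 2)) + Finsupp.single (Sum.inr 4) (d (Sum.inr 4)) := by
  ext v
  rcases v with ⟨i, hi⟩ | ⟨i, hi⟩ <;>
  · interval_cases i <;>
      simp_all [Finsupp.single_apply, Fin.ext_iff, (show ((0:Fin 5):ℕ) = 0 by rfl), (show ((1:Fin 5):ℕ) = 1 by rfl), (show ((2:Fin 5):ℕ) = 2 by rfl), (show ((3:Fin 5):ℕ) = 3 by rfl), (show ((4:Fin 5):ℕ) = 4 by rfl)]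

lemma E_inj {d d' : (Fin 5 ⊕ Fin 5) →₀ ℕ} (hd : Std d) (hd' : Std d')
    (h : E d = E d') : d = d' := by
  have h0 := DFunLike.congr_fun h 0
  have h1 := DFunLike.congr_fun h 1
  have h2 := DFunLike.congr_fun h 2
  have h3 := DFunLike.congr_fun h 3
  have h4 := DFunLike.congr_fun h 4
  simp only [E, Finsupp.add_apply, Finsupp.single_apply, Fin.ext_iff,
    (show ((0:Fin 5):ℕ) = 0 by rfl), (show ((1:Fin 5):ℕ) = 1 by rfl), (show ((2:Fin 5):ℕ) = 2 by rfl), (show ((3:Fin 5):ℕ) = 3 by rfl), (show ((4:Fin 5):ℕ) = 4 by rfl)] at h0 h1 h2 h3 h4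
  norm_num at h0 h1 h2 h3 h4
  obtain ⟨p1, p2, p3, p4, p5, p6⟩ := hd
  obtain ⟨q1, q2, q3, q4, q5, q6⟩ := hd'
  have e1 : d (Sum.inl 0) = d' (Sum.inl 0) := by omega
  have e2 : d (Sum.inl 2) = d' (Sum.inl 2) := by omega
  have e3 : d (Sum.inl 4) = d' (Sum.inl 4) := by omega
  have e4 : d (Sum.inr 0) = d' (Sum.inr 0) := by omega
  have e5 : d (Sum.inr 2) = d' (Sum.inr 2) := by omega
  have e6 : d (Sum.inr 4) = d' (Sum.inr 4) := by omega
  rw [std_expand p1 p2 p3 p4, std_expand q1 q2 q3 q4, e1, e2, e3, e4, e5, e6]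

lemma monomial_singles (a1 a3 a5 b1 b3 b5 : ℕ) :
    (monomial (Finsupp.single (Sum.inl 0) a1 + Finsupp.single (Sum.inl 2) a3 +
        Finsupp.single (Sum.inl 4) a5 + Finsupp.single (Sum.inr 0) b1 +
        Finsupp.single (Sum.inr 2) b3 + Finsupp.single (Sum.inr 4) b5) (1 : K) :
      MvPolynomial (Fin 5 ⊕ Fin 5) K) =
    X (Sum.inl 0) ^ a1 * X (Sum.inl 2) ^ a3 * X (Sum.inl 4) ^ a5 *
    X (Sum.inr 0) ^ b1 * X (Sum.inr 2) ^ b3 * X (Sum.inr 4) ^ b5 := by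
  simp [X_pow_eq_monomial, monomial_mul]

lemma monomial_singles5 (e0 e1 e2 e3 e4 : ℕ) :
    (monomial (Finsupp.single (0 : Fin 5) e0 + Finsupp.single 1 e1 + Finsupp.single 2 e2 +
        Finsupp.single 3 e3 + Finsupp.single 4 e4) (1 : K) : MvPolynomial (Fin 5) K) =
    X 0 ^ e0 * X 1 ^ e1 * X 2 ^ e2 * X 3 ^ e3 * X 4 ^ e4 := by
  simp [X_pow_eq_monomial, monomial_mul]

lemma phi_monomial_std {d : (Fin 5 ⊕ Fin 5) →₀ ℕ} (h : Std d) :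
    φ K (monomial d 1) = monomial (E d) 1 := by
  have w0 : w K 0 = X 2 := by simp [w]
  have w2 : w K 2 = X 3 := by simp [w]
  have w4 : w K 4 = X 4 := by simp [w]
  conv_lhs => rw [std_expand h.1 h.2.1 h.2.2.1 h.2.2.2.1, monomial_singles]
  rw [E, monomial_singles5]
  simp only [φ, map_mul, map_pow, aeval_X, Sum.elim_inl, Sum.elim_inr, w0, w2, w4]
  ring

noncomputable def J1 : Ideal (MvPolynomial (Fin 5 ⊕ Fin 5) K) :=
  Ideal.span {X (Sum.inl 1), X (Sum.inr 1), X (Sum.inl 3), X (Sum.inr 3),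
    binDelta5 K 0 2, binDelta5 K 0 4, binDelta5 K 2 4}

noncomputable def M : Submodule K (MvPolynomial (Fin 5 ⊕ Fin 5) K) :=
  (Submodule.restrictScalars K (J1 K)) ⊔
    Submodule.span K (Set.range (fun d : {d // Std d} =>
      (monomial d.1 1 : MvPolynomial (Fin 5 ⊕ Fin 5) K)))

def μ (d : (Fin 5 ⊕ Fin 5) →₀ ℕ) : ℕ :=
  d (Sum.inl 2) * d (Sum.inr 0) + d (Sum.inl 4) * d (Sum.inr 0) +
    d (Sum.inl 4) * d (Sum.inr 2)

lemma mem_of_var {d : (Fin 5 ⊕ Fin 5) →₀ ℕ} (v : Fin 5 ⊕ Fin 5)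
    (hv : (X v : MvPolynomial (Fin 5 ⊕ Fin 5) K) ∈ J1 K) (h : 0 < d v) :
    (monomial d 1 : MvPolynomial (Fin 5 ⊕ Fin 5) K) ∈ M K := by
  have he : (monomial d (1:K) : MvPolynomial (Fin 5 ⊕ Fin 5) K) =
      monomial (d - Finsupp.single v 1) 1 * X v := by
    rw [show (X v : MvPolynomial (Fin 5 ⊕ Fin 5) K) = X v ^ 1 by ring, X_pow_eq_monomial,
      monomial_mul, tsub_add_cancel_of_le (Finsupp.single_le_iff.2 h), mul_one]
  rw [he]
  exact Submodule.mem_sup_left (Ideal.mul_mem_left _ _ hv)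

lemma sub_sub_add_add {d : (Fin 5 ⊕ Fin 5) →₀ ℕ} {w1 w2 : Fin 5 ⊕ Fin 5}
    (h1 : 0 < d w1) (h2 : 0 < d w2) (hne : w1 ≠ w2) :
    d - Finsupp.single w1 1 - Finsupp.single w2 1 + Finsupp.single w1 1 +
      Finsupp.single w2 1 = d := by
  ext v
  simp only [Finsupp.coe_add, Finsupp.coe_tsub, Pi.add_apply, Pi.sub_apply,
    Finsupp.single_apply]
  by_cases e1 : w1 = v <;> by_cases e2 : w2 = v <;> simp_all <;> omega

lemma rewrite_eq (d : (Fin 5 ⊕ Fin 5) →₀ ℕ) {w1 w2 u1 u2 : Fin 5 ⊕ Fin 5}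
    (h1 : 0 < d w1) (h2 : 0 < d w2) (hne : w1 ≠ w2) :
    (monomial d 1 : MvPolynomial (Fin 5 ⊕ Fin 5) K) =
      monomial (d - Finsupp.single w1 1 - Finsupp.single w2 1 + Finsupp.single u1 1 +
        Finsupp.single u2 1) 1 -
      monomial (d - Finsupp.single w1 1 - Finsupp.single w2 1) 1 *
        (X u1 * X u2 - X w1 * X w2) := by
  have key : ∀ (e : (Fin 5 ⊕ Fin 5) →₀ ℕ) (a b : Fin 5 ⊕ Fin 5),
      (monomial e 1 : MvPolynomial (Fin 5 ⊕ Fin 5) K) * (X a * X b) =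
        monomial (e + Finsupp.single a 1 + Finsupp.single b 1) 1 := by
    intro e a b
    rw [show (X a : MvPolynomial (Fin 5 ⊕ Fin 5) K) = X a ^ 1 by ring,
      show (X b : MvPolynomial (Fin 5 ⊕ Fin 5) K) = X b ^ 1 by ring,
      X_pow_eq_monomial, X_pow_eq_monomial, ← mul_assoc, monomial_mul, monomial_mul,
      mul_one, mul_one]
  rw [mul_sub, key, key, sub_sub_add_add h1 h2 hne]
  ring

lemma nat_dec1 (a c b e : ℕ) (ha : 0 < a) (hb : 0 < b) :
    (a-1)*(b-1) + c*(b-1) + c*(e+1) < a*b + c*b + c*e := by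
  obtain ⟨a, rfl⟩ := Nat.exists_eq_succ_of_ne_zero ha.ne'
  obtain ⟨b, rfl⟩ := Nat.exists_eq_succ_of_ne_zero hb.ne'
  simp only [Nat.succ_sub_one]
  nlinarith

lemma nat_dec2 (a3 a5 b1 b3 : ℕ) (h5 : 0 < a5) (hb1 : 0 < b1) :
    a3*(b1-1) + (a5-1)*(b1-1) + (a5-1)*b3 < a3*b1 + a5*b1 + a5*b3 := by
  obtain ⟨a, rfl⟩ := Nat.exists_eq_succ_of_ne_zero h5.ne'
  obtain ⟨b, rfl⟩ := Nat.exists_eq_succ_of_ne_zero hb1.ne'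
  simp only [Nat.succ_sub_one]
  nlinarith

lemma nat_dec3 (a3 a5 b1 b3 : ℕ) (h5 : 0 < a5) (hb3 : 0 < b3) :
    (a3+1)*b1 + (a5-1)*b1 + (a5-1)*(b3-1) < a3*b1 + a5*b1 + a5*b3 := by
  obtain ⟨a, rfl⟩ := Nat.exists_eq_succ_of_ne_zero h5.ne'
  obtain ⟨b, rfl⟩ := Nat.exists_eq_succ_of_ne_zero hb3.ne'
  simp only [Nat.succ_sub_one]
  nlinarith

lemma mu_lt_1 {d : (Fin 5 ⊕ Fin 5) →₀ ℕ} (h1 : 0 < d (Sum.inl 2)) (h2 : 0 < d (Sum.inr 0)) :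
    μ (d - Finsupp.single (Sum.inl 2) 1 - Finsupp.single (Sum.inr 0) 1 +
       Finsupp.single (Sum.inl 0) 1 + Finsupp.single (Sum.inr 2) 1) < μ d := by
  simp only [μ, Finsupp.coe_add, Finsupp.coe_tsub, Pi.add_apply, Pi.sub_apply,
    Finsupp.single_apply]
  norm_num [Fin.ext_iff, (show ((0:Fin 5):ℕ) = 0 by rfl), (show ((2:Fin 5):ℕ) = 2 by rfl),
    (show ((4:Fin 5):ℕ) = 4 by rfl)]
  exact nat_dec1 _ _ _ _ h1 h2

lemma mu_lt_2 {d : (Fin 5 ⊕ Fin 5) →₀ ℕ} (h1 : 0 < d (Sum.inl 4)) (h2 : 0 < d (Sum.inr 0)) :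
    μ (d - Finsupp.single (Sum.inl 4) 1 - Finsupp.single (Sum.inr 0) 1 +
       Finsupp.single (Sum.inl 0) 1 + Finsupp.single (Sum.inr 4) 1) < μ d := by
  simp only [μ, Finsupp.coe_add, Finsupp.coe_tsub, Pi.add_apply, Pi.sub_apply,
    Finsupp.single_apply]
  norm_num [Fin.ext_iff, (show ((0:Fin 5):ℕ) = 0 by rfl), (show ((2:Fin 5):ℕ) = 2 by rfl),
    (show ((4:Fin 5):ℕ) = 4 by rfl)]
  exact nat_dec2 _ _ _ _ h1 h2

lemma mu_lt_3 {d : (Fin 5 ⊕ Fin 5) →₀ ℕ} (h1 : 0 < d (Sum.inl 4)) (h2 : 0 < d (Sum.inr 2)) :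
    μ (d - Finsupp.single (Sum.inl 4) 1 - Finsupp.single (Sum.inr 2) 1 +
       Finsupp.single (Sum.inl 2) 1 + Finsupp.single (Sum.inr 4) 1) < μ d := by
  simp only [μ, Finsupp.coe_add, Finsupp.coe_tsub, Pi.add_apply, Pi.sub_apply,
    Finsupp.single_apply]
  norm_num [Fin.ext_iff, (show ((0:Fin 5):ℕ) = 0 by rfl), (show ((2:Fin 5):ℕ) = 2 by rfl),
    (show ((4:Fin 5):ℕ) = 4 by rfl)]
  exact nat_dec3 _ _ _ _ h1 h2

lemma monomial_mem_M : ∀ (n : ℕ) (d : (Fin 5 ⊕ Fin 5) →₀ ℕ), μ d < n →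
    (monomial d 1 : MvPolynomial (Fin 5 ⊕ Fin 5) K) ∈ M K := by
  intro n
  induction n with
  | zero => intro d h; omega
  | succ n ih =>
    intro d hd
    by_cases k1 : 0 < d (Sum.inl 1)
    · exact mem_of_var K _ (Ideal.subset_span (by simp)) k1
    by_cases k2 : 0 < d (Sum.inr 1)
    · exact mem_of_var K _ (Ideal.subset_span (by simp)) k2
    by_cases k3 : 0 < d (Sum.inl 3)
    · exact mem_of_var K _ (Ideal.subset_span (by simp)) k3
    by_cases k4 : 0 < d (Sum.inr 3)
    · exact mem_of_var K _ (Ideal.subset_span (by simp)) k4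
    by_cases r1 : 0 < d (Sum.inl 2) ∧ 0 < d (Sum.inr 0)
    · rw [rewrite_eq K d (w1 := Sum.inl 2) (w2 := Sum.inr 0) (u1 := Sum.inl 0)
        (u2 := Sum.inr 2) r1.1 r1.2 (by simp)]
      refine sub_mem (ih _ (lt_of_lt_of_le (mu_lt_1 r1.1 r1.2) (by omega)))
        (Submodule.mem_sup_left (Ideal.mul_mem_left _ _ ?_))
      exact Ideal.subset_span (by simp [binDelta5])
    by_cases r2 : 0 < d (Sum.inl 4) ∧ 0 < d (Sum.inr 0)
    · rw [rewrite_eq K d (w1 := Sum.inl 4) (w2 := Sum.inr 0) (u1 := Sum.inl 0)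
        (u2 := Sum.inr 4) r2.1 r2.2 (by simp)]
      refine sub_mem (ih _ (lt_of_lt_of_le (mu_lt_2 r2.1 r2.2) (by omega)))
        (Submodule.mem_sup_left (Ideal.mul_mem_left _ _ ?_))
      exact Ideal.subset_span (by simp [binDelta5])
    by_cases r3 : 0 < d (Sum.inl 4) ∧ 0 < d (Sum.inr 2)
    · rw [rewrite_eq K d (w1 := Sum.inl 4) (w2 := Sum.inr 2) (u1 := Sum.inl 2)
        (u2 := Sum.inr 4) r3.1 r3.2 (by simp)]
      refine sub_mem (ih _ (lt_of_lt_of_le (mu_lt_3 r3.1 r3.2) (by omega)))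
        (Submodule.mem_sup_left (Ideal.mul_mem_left _ _ ?_))
      exact Ideal.subset_span (by simp [binDelta5])
    have hstd : Std d := ⟨by omega, by omega, by omega, by omega,
      fun h => by omega, fun h => ⟨by omega, by omega⟩⟩
    exact Submodule.mem_sup_right (Submodule.subset_span ⟨⟨d, hstd⟩, rfl⟩)

lemma wv1 : w K 1 = 0 := by norm_num [w, Fin.ext_iff, (show ((0:Fin 5):ℕ) = 0 by rfl), (show ((1:Fin 5):ℕ) = 1 by rfl), (show ((2:Fin 5):ℕ) = 2 by rfl), (show ((3:Fin 5):ℕ) = 3 by rfl), (show ((4:Fin 5):ℕ) = 4 by rfl)]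
lemma wv3 : w K 3 = 0 := by norm_num [w, Fin.ext_iff, (show ((0:Fin 5):ℕ) = 0 by rfl), (show ((1:Fin 5):ℕ) = 1 by rfl), (show ((2:Fin 5):ℕ) = 2 by rfl), (show ((3:Fin 5):ℕ) = 3 by rfl), (show ((4:Fin 5):ℕ) = 4 by rfl)]

lemma M_eq_top : M K = ⊤ := by
  rw [eq_top_iff]
  intro f _
  rw [f.as_sum]
  refine Submodule.sum_mem _ fun d _ => ?_
  have h : (monomial d (coeff d f) : MvPolynomial (Fin 5 ⊕ Fin 5) K) =
      coeff d f • monomial d 1 := by simp [smul_monomial]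
  rw [h]
  exact Submodule.smul_mem _ _ (monomial_mem_M K (μ d + 1) d (by omega))

lemma J1_le_ker : J1 K ≤ RingHom.ker (φ K) := by
  have w0 : w K 0 = X 2 := by norm_num [w, Fin.ext_iff, (show ((0:Fin 5):ℕ) = 0 by rfl), (show ((1:Fin 5):ℕ) = 1 by rfl), (show ((2:Fin 5):ℕ) = 2 by rfl), (show ((3:Fin 5):ℕ) = 3 by rfl), (show ((4:Fin 5):ℕ) = 4 by rfl)]
  have w2 : w K 2 = X 3 := by norm_num [w, Fin.ext_iff, (show ((0:Fin 5):ℕ) = 0 by rfl), (show ((1:Fin 5):ℕ) = 1 by rfl), (show ((2:Fin 5):ℕ) = 2 by rfl), (show ((3:Fin 5):ℕ) = 3 by rfl), (show ((4:Fin 5):ℕ) = 4 by rfl)]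
  have w4 : w K 4 = X 4 := by norm_num [w, Fin.ext_iff, (show ((0:Fin 5):ℕ) = 0 by rfl), (show ((1:Fin 5):ℕ) = 1 by rfl), (show ((2:Fin 5):ℕ) = 2 by rfl), (show ((3:Fin 5):ℕ) = 3 by rfl), (show ((4:Fin 5):ℕ) = 4 by rfl)]
  rw [J1, Ideal.span_le]
  intro f hf
  simp only [Set.mem_insert_iff, Set.mem_singleton_iff] at hf
  simp only [SetLike.mem_coe, RingHom.mem_ker]
  rcases hf with rfl | rfl | rfl | rfl | rfl | rfl | rfl <;>
    · simp only [φ, binDelta5, map_sub, map_mul, aeval_X, Sum.elim_inl, Sum.elim_inr,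
        w0, w2, w4, wv1, wv3]
      ring

lemma span_std_inj {s : MvPolynomial (Fin 5 ⊕ Fin 5) K}
    (hs : s ∈ Submodule.span K (Set.range (fun d : {d // Std d} =>
      (monomial d.1 1 : MvPolynomial (Fin 5 ⊕ Fin 5) K))))
    (h0 : φ K s = 0) : s = 0 := by
  classical
  rw [Finsupp.mem_span_range_iff_exists_finsupp] at hs
  obtain ⟨c, rfl⟩ := hs
  have hφ : φ K (c.sum fun i a => a • monomial i.1 1) =
      c.sum fun i a => a • monomial (E i.1) 1 := by
    rw [map_finsuppSum]
    exact Finsupp.sum_congr fun i _ => by rw [map_smul, phi_monomial_std K i.2]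
  rw [hφ] at h0
  have hc : c = 0 := by
    ext i0
    have h1 := congrArg (coeff (E i0.1)) h0
    rw [coeff_zero] at h1
    have h2 : ∑ i ∈ c.support, c i * (if E i.1 = E i0.1 then 1 else 0) = 0 := by
      simpa [Finsupp.sum, coeff_sum, coeff_smul, coeff_monomial, smul_eq_mul] using h1
    have h3 : ∀ i ∈ c.support, c i * (if E i.1 = E i0.1 then 1 else 0) =
        if i = i0 then c i else 0 := by
      intro i _
      by_cases h : i = i0
      · subst h; simp
      · have hne : E i.1 ≠ E i0.1 := fun he => h (Subtype.ext (E_inj i.2 i0.2 he))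
        simp [h, hne]
    rw [Finset.sum_congr rfl h3, Finset.sum_ite_eq' c.support i0 (fun i => c i)] at h2
    by_cases hi : i0 ∈ c.support
    · simpa [hi] using h2
    · simpa using Finsupp.notMem_support_iff.1 hi
  rw [hc]
  simp

lemma J1_eq_ker : J1 K = RingHom.ker (φ K) := by
  refine le_antisymm (J1_le_ker K) ?_
  intro f hf
  have hfM : f ∈ M K := by rw [M_eq_top]; trivial
  obtain ⟨p, hp, s, hsp, rfl⟩ := Submodule.mem_sup.1 hfM
  have hφp : φ K p = 0 := J1_le_ker K hp
  have hφs : φ K s = 0 := by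
    have hall : φ K (p + s) = 0 := hf
    rw [map_add, hφp, zero_add] at hall
    exact hall
  rw [span_std_inj K hsp hφs, add_zero]
  exact hp

lemma J1_prime : (J1 K).IsPrime := by
  rw [J1_eq_ker]
  exact RingHom.ker_isPrime _



def killS : Finset (Fin 5 ⊕ Fin 5) :=
  {Sum.inl 1, Sum.inr 1, Sum.inl 2, Sum.inr 2, Sum.inl 3, Sum.inr 3}

noncomputable def P2 : Ideal (MvPolynomial (Fin 5 ⊕ Fin 5) K) :=
  Ideal.span {X (Sum.inl 1), X (Sum.inr 1), X (Sum.inl 2), X (Sum.inr 2),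
    X (Sum.inl 3), X (Sum.inr 3)}

lemma P2_eq_ker : P2 K =
    RingHom.ker (aeval (R := K) (fun v => if v ∈ killS then 0 else X v) :
      MvPolynomial (Fin 5 ⊕ Fin 5) K →ₐ[K] MvPolynomial (Fin 5 ⊕ Fin 5) K) := by
  rw [P2, ker_killVars]
  congr 1
  simp only [killS, Finset.coe_insert, Finset.coe_singleton, Set.image_insert_eq,
    Set.image_singleton]

lemma P2_prime : (P2 K).IsPrime := by
  rw [P2_eq_ker]
  exact RingHom.ker_isPrime _

noncomputable def q : Fin 5 ⊕ Fin 5 → K := fun v =>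
  if v = Sum.inl 0 ∨ v = Sum.inr 4 then 1 else 0

lemma delta15_notMem_P2 : binDelta5 K 0 4 ∉ P2 K := by
  intro hmem
  have hle : P2 K ≤ RingHom.ker (eval (q K)) := by
    rw [P2, Ideal.span_le]
    intro f hf
    simp only [Set.mem_insert_iff, Set.mem_singleton_iff] at hf
    simp only [SetLike.mem_coe, RingHom.mem_ker]
    rcases hf with rfl | rfl | rfl | rfl | rfl | rfl <;> simp [q]
  have h0 := hle hmem
  rw [RingHom.mem_ker] at h0
  rw [show eval (q K) (binDelta5 K 0 4) = 1 by simp [binDelta5, q]] at h0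
  exact one_ne_zero h0

lemma x3_notMem_J1 : (X (Sum.inl 2) : MvPolynomial (Fin 5 ⊕ Fin 5) K) ∉ J1 K := by
  rw [J1_eq_ker]
  intro h
  rw [RingHom.mem_ker] at h
  have hφ : φ K (X (Sum.inl 2)) = X 0 * X 3 := by
    simp only [φ, aeval_X, Sum.elim_inl]
    norm_num [w, Fin.ext_iff, (show ((0:Fin 5):ℕ) = 0 by rfl), (show ((2:Fin 5):ℕ) = 2 by rfl),
      (show ((4:Fin 5):ℕ) = 4 by rfl)]
  rw [hφ] at h
  have h2 := congrArg (eval (fun _ => (1:K))) h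
  simp at h2

lemma key_x : X (Sum.inl 2) * binDelta5 K 0 4 =
    X (Sum.inl 0) * binDelta5 K 2 4 + X (Sum.inl 4) * binDelta5 K 0 2 := by
  simp only [binDelta5]; ring

lemma key_y : X (Sum.inr 2) * binDelta5 K 0 4 =
    X (Sum.inr 0) * binDelta5 K 2 4 + X (Sum.inr 4) * binDelta5 K 0 2 := by
  simp only [binDelta5]; ring

noncomputable def Jmid : Ideal (MvPolynomial (Fin 5 ⊕ Fin 5) K) :=
  Ideal.span {X (Sum.inl 1), X (Sum.inr 1), X (Sum.inl 3), X (Sum.inr 3),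
    binDelta5 K 0 2, binDelta5 K 2 4}

lemma Jmid_le_J1 : Jmid K ≤ J1 K := by
  rw [Jmid, Ideal.span_le]
  intro x hx
  apply Ideal.subset_span
  simp only [Set.mem_insert_iff, Set.mem_singleton_iff] at hx ⊢
  tauto

lemma Jmid_le_P2 : Jmid K ≤ P2 K := by
  have m1 : (X (Sum.inl 2) : MvPolynomial (Fin 5 ⊕ Fin 5) K) ∈ P2 K :=
    Ideal.subset_span (by simp)
  have m2 : (X (Sum.inr 2) : MvPolynomial (Fin 5 ⊕ Fin 5) K) ∈ P2 K :=
    Ideal.subset_span (by simp)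
  rw [Jmid, Ideal.span_le]
  intro f hf
  simp only [Set.mem_insert_iff, Set.mem_singleton_iff] at hf
  rcases hf with rfl | rfl | rfl | rfl | rfl | rfl
  · exact Ideal.subset_span (by simp)
  · exact Ideal.subset_span (by simp)
  · exact Ideal.subset_span (by simp)
  · exact Ideal.subset_span (by simp)
  · exact sub_mem (Ideal.mul_mem_left _ _ m2) (Ideal.mul_mem_right _ _ m1)
  · exact sub_mem (Ideal.mul_mem_right _ _ m1) (Ideal.mul_mem_left _ _ m2)

lemma J1_split : J1 K = Jmid K ⊔ Ideal.span {binDelta5 K 0 4} := by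
  rw [J1, Jmid, ← Ideal.span_union]
  congr 1
  ext x
  simp only [Set.mem_insert_iff, Set.mem_singleton_iff, Set.mem_union]
  tauto

lemma P2_mul_delta15 : ∀ g ∈ P2 K, g * binDelta5 K 0 4 ∈ Jmid K := by
  have hd13 : binDelta5 K 0 2 ∈ Jmid K := Ideal.subset_span (by simp)
  have hd35 : binDelta5 K 2 4 ∈ Jmid K := Ideal.subset_span (by simp)
  have hcolon : P2 K ≤ (Jmid K).colon (Ideal.span {binDelta5 K 0 4}) := by
    rw [P2, Ideal.span_le]
    intro f hf
    simp only [Set.mem_insert_iff, Set.mem_singleton_iff] at hf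
    simp only [SetLike.mem_coe]
    rcases hf with rfl | rfl | rfl | rfl | rfl | rfl
    · exact Ideal.mem_colon_span_singleton.2 (Ideal.mul_mem_right _ _ (Ideal.subset_span (by simp)))
    · exact Ideal.mem_colon_span_singleton.2 (Ideal.mul_mem_right _ _ (Ideal.subset_span (by simp)))
    · exact Ideal.mem_colon_span_singleton.2
        (by rw [key_x]; exact add_mem (Ideal.mul_mem_left _ _ hd35) (Ideal.mul_mem_left _ _ hd13))
    · exact Ideal.mem_colon_span_singleton.2
        (by rw [key_y]; exact add_mem (Ideal.mul_mem_left _ _ hd35) (Ideal.mul_mem_left _ _ hd13))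
    · exact Ideal.mem_colon_span_singleton.2 (Ideal.mul_mem_right _ _ (Ideal.subset_span (by simp)))
    · exact Ideal.mem_colon_span_singleton.2 (Ideal.mul_mem_right _ _ (Ideal.subset_span (by simp)))
  exact fun g hg => Ideal.mem_colon_span_singleton.1 (hcolon hg)

lemma Jmid_eq_inf : Jmid K = J1 K ⊓ P2 K := by
  refine le_antisymm (le_inf (Jmid_le_J1 K) (Jmid_le_P2 K)) ?_
  intro f hf
  obtain ⟨hf1, hf2⟩ := Submodule.mem_inf.1 hf
  rw [J1_split] at hf1
  obtain ⟨j, hj, g, hg, rfl⟩ := Submodule.mem_sup.1 hf1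
  obtain ⟨a, rfl⟩ := Ideal.mem_span_singleton'.1 hg
  have hδ : a * binDelta5 K 0 4 ∈ P2 K :=
    (Ideal.add_mem_iff_right _ (Jmid_le_P2 K hj)).1 hf2
  have ha : a ∈ P2 K :=
    ((P2_prime K).mem_or_mem hδ).resolve_right (delta15_notMem_P2 K)
  exact Ideal.add_mem _ hj (P2_mul_delta15 K a ha)

lemma x3_notMem_Jmid : (X (Sum.inl 2) : MvPolynomial (Fin 5 ⊕ Fin 5) K) ∉ Jmid K :=
  fun h => x3_notMem_J1 K (Jmid_le_J1 K h)

lemma delta15_notMem_Jmid : binDelta5 K 0 4 ∉ Jmid K :=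
  fun h => delta15_notMem_P2 K (Jmid_le_P2 K h)

lemma Jmid_not_prime : ¬ (Jmid K).IsPrime := by
  intro hp
  have hmem : X (Sum.inl 2) * binDelta5 K 0 4 ∈ Jmid K := by
    rw [key_x]
    exact add_mem (Ideal.mul_mem_left _ _ (Ideal.subset_span (by simp)))
      (Ideal.mul_mem_left _ _ (Ideal.subset_span (by simp)))
  rcases hp.mem_or_mem hmem with h | h
  · exact x3_notMem_Jmid K h
  · exact delta15_notMem_Jmid K h

lemma sum_eq_Jmid :
    (Ideal.span {X (Sum.inl 1), X (Sum.inr 1), binDelta5 K 2 3, binDelta5 K 2 4,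
        binDelta5 K 3 4} +
      Ideal.span {X (Sum.inl 3), X (Sum.inr 3), binDelta5 K 0 1, binDelta5 K 0 2,
        binDelta5 K 1 2} +
      Ideal.span {X (Sum.inl 1), X (Sum.inr 1), X (Sum.inl 3), X (Sum.inr 3)} :
      Ideal (MvPolynomial (Fin 5 ⊕ Fin 5) K)) = Jmid K := by
  have g1 : (X (Sum.inl 1) : MvPolynomial (Fin 5 ⊕ Fin 5) K) ∈ Jmid K :=
    Ideal.subset_span (by simp)
  have g2 : (X (Sum.inr 1) : MvPolynomial (Fin 5 ⊕ Fin 5) K) ∈ Jmid K :=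
    Ideal.subset_span (by simp)
  have g3 : (X (Sum.inl 3) : MvPolynomial (Fin 5 ⊕ Fin 5) K) ∈ Jmid K :=
    Ideal.subset_span (by simp)
  have g4 : (X (Sum.inr 3) : MvPolynomial (Fin 5 ⊕ Fin 5) K) ∈ Jmid K :=
    Ideal.subset_span (by simp)
  simp only [Ideal.add_eq_sup]
  apply le_antisymm
  · refine sup_le (sup_le ?_ ?_) ?_
    · rw [Ideal.span_le]
      intro f hf
      simp only [Set.mem_insert_iff, Set.mem_singleton_iff] at hf
      rcases hf with rfl | rfl | rfl | rfl | rfl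
      · exact g1
      · exact g2
      · exact sub_mem (Ideal.mul_mem_left _ _ g4) (Ideal.mul_mem_right _ _ g3)
      · exact Ideal.subset_span (by simp)
      · exact sub_mem (Ideal.mul_mem_right _ _ g3) (Ideal.mul_mem_left _ _ g4)
    · rw [Ideal.span_le]
      intro f hf
      simp only [Set.mem_insert_iff, Set.mem_singleton_iff] at hf
      rcases hf with rfl | rfl | rfl | rfl | rfl
      · exact g3
      · exact g4
      · exact sub_mem (Ideal.mul_mem_left _ _ g2) (Ideal.mul_mem_right _ _ g1)
      · exact Ideal.subset_span (by simp)
      · exact sub_mem (Ideal.mul_mem_right _ _ g1) (Ideal.mul_mem_left _ _ g2)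
    · rw [Ideal.span_le]
      intro f hf
      simp only [Set.mem_insert_iff, Set.mem_singleton_iff] at hf
      rcases hf with rfl | rfl | rfl | rfl
      · exact g1
      · exact g2
      · exact g3
      · exact g4
  · rw [Jmid, Ideal.span_le]
    intro f hf
    simp only [Set.mem_insert_iff, Set.mem_singleton_iff] at hf
    rcases hf with rfl | rfl | rfl | rfl | rfl | rfl
    · exact Submodule.mem_sup_right (Ideal.subset_span (by simp))
    · exact Submodule.mem_sup_right (Ideal.subset_span (by simp))
    · exact Submodule.mem_sup_right (Ideal.subset_span (by simp))
    · exact Submodule.mem_sup_right (Ideal.subset_span (by simp))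
    · exact Submodule.mem_sup_left (Submodule.mem_sup_right (Ideal.subset_span (by simp)))
    · exact Submodule.mem_sup_left (Submodule.mem_sup_left (Ideal.subset_span (by simp)))

end DetAux

/-- In `K[x_1,…,x_5,y_1,…,y_5]`, with `I_2 = ⟨x_2,y_2,Δ_{34},Δ_{35},Δ_{45}⟩`,
`I_4 = ⟨x_4,y_4,Δ_{12},Δ_{13},Δ_{23}⟩` and `I_5 = ⟨x_2,y_2,x_4,y_4⟩`, the sum
`I_2 + I_4 + I_5` equals `⟨x_2,y_2,x_4,y_4,Δ_{13},Δ_{35}⟩`, admits the primary decomposition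
`⟨x_2,y_2,x_4,y_4,Δ_{13},Δ_{15},Δ_{35}⟩ ∩ ⟨x_2,y_2,x_3,y_3,x_4,y_4⟩` into primes, and is not
itself a prime ideal. -/
theorem sum_I2_I4_I5 (K : Type) [Field K] :
    (Ideal.span {X (Sum.inl 1), X (Sum.inr 1), binDelta5 K 2 3, binDelta5 K 2 4,
        binDelta5 K 3 4} +
      Ideal.span {X (Sum.inl 3), X (Sum.inr 3), binDelta5 K 0 1, binDelta5 K 0 2,
        binDelta5 K 1 2} +
      Ideal.span {X (Sum.inl 1), X (Sum.inr 1), X (Sum.inl 3), X (Sum.inr 3)} =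
        Ideal.span {X (Sum.inl 1), X (Sum.inr 1), X (Sum.inl 3), X (Sum.inr 3),
          binDelta5 K 0 2, binDelta5 K 2 4}) ∧
    (Ideal.span {X (Sum.inl 1), X (Sum.inr 1), X (Sum.inl 3), X (Sum.inr 3),
        binDelta5 K 0 2, binDelta5 K 2 4} =
      Ideal.span {X (Sum.inl 1), X (Sum.inr 1), X (Sum.inl 3), X (Sum.inr 3),
          binDelta5 K 0 2, binDelta5 K 0 4, binDelta5 K 2 4} ⊓
        Ideal.span {X (Sum.inl 1), X (Sum.inr 1), X (Sum.inl 2), X (Sum.inr 2),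
          X (Sum.inl 3), X (Sum.inr 3)}) ∧
    (Ideal.span {X (Sum.inl 1), X (Sum.inr 1), X (Sum.inl 3), X (Sum.inr 3),
        binDelta5 K 0 2, binDelta5 K 0 4, binDelta5 K 2 4} :
        Ideal (MvPolynomial (Fin 5 ⊕ Fin 5) K)).IsPrime ∧
    (Ideal.span {X (Sum.inl 1), X (Sum.inr 1), X (Sum.inl 2), X (Sum.inr 2),
        X (Sum.inl 3), X (Sum.inr 3)} :
        Ideal (MvPolynomial (Fin 5 ⊕ Fin 5) K)).IsPrime ∧
    ¬ (Ideal.span {X (Sum.inl 1), X (Sum.inr 1), X (Sum.inl 3), X (Sum.inr 3),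
        binDelta5 K 0 2, binDelta5 K 2 4} :
        Ideal (MvPolynomial (Fin 5 ⊕ Fin 5) K)).IsPrime := by
  refine ⟨DetAux.sum_eq_Jmid K, ?_, DetAux.J1_prime K, DetAux.P2_prime K,
    DetAux.Jmid_not_prime K⟩
  exact DetAux.Jmid_eq_inf K
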